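/- Let s ≥ 2 and let m be a positive integer. Let M' be the s×s integer matrix with M'(1,1)=m, M'(i,i)=2 for 2 ≤ i ≤ s, M'(i,1)=−c for 2 ≤ i ≤ s, and all other entries 0, where c is an odd integer. Then the cokernel ℤ^s / M'·ℤ^s is isomorphic to (ℤ/2)^{s−2} ⊕ ℤ/(2m). -/

import Mathlib

set_option maxHeartbeats 1000000

def coconutMatrix (s : ℕ) (m c : ℤ) : Matrix (Fin s) (Fin s) ℤ :=
  fun i j =>
    if i = j then (if (i : ℕ) = 0 then m else 2)
    else if (j : ℕ) = 0 then -c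
    else 0

theorem coconut_cokernel_odd (s : ℕ) (hs : 2 ≤ s) (m : ℕ) (hm : 0 < m)
    (c : ℤ) (hc : Odd c) :
    Nonempty (((Fin s → ℤ) ⧸
        LinearMap.range (Matrix.toLin' (coconutMatrix s (m : ℤ) c)))
      ≃+ ((Fin (s-2) → ZMod 2) × ZMod (2*m))) := by
  have h0 : 0 < s := by omega
  have hlast : s - 1 < s := by omega
  haveI : NeZero (2*m) := ⟨by omega⟩
  set M := coconutMatrix s (m : ℤ) c with hMdef
  set i0 : Fin s := ⟨0, h0⟩ with hi0def
  set iL : Fin s := ⟨s-1, hlast⟩ with hiLdef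
  -- formula for the linear map
  have hML : ∀ (y : Fin s → ℤ) (i : Fin s),
      Matrix.toLin' M y i =
        if (i : ℕ) = 0 then (m : ℤ) * y i else 2 * y i - c * y i0 := by
    intro y i
    rw [Matrix.toLin'_apply]
    show ∑ j, M i j * y j = _
    by_cases hi : (i : ℕ) = 0
    · have hii0 : i = i0 := Fin.ext hi
      rw [if_pos hi, Finset.sum_eq_single_of_mem i (Finset.mem_univ i)]
      · simp [M, coconutMatrix, hi]
      · intro b _ hb
        have hb0 : (b : ℕ) ≠ 0 := by
          intro h; exact hb (by rw [hii0]; exact Fin.ext h)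
        have hib : i ≠ b := fun h => hb h.symm
        simp [M, coconutMatrix, hb0, hib]
    · have hii0 : i ≠ i0 := by intro h; exact hi (by rw [h])
      rw [if_neg hi, ← Finset.add_sum_erase _ _ (Finset.mem_univ i0)]
      have hmem : i ∈ Finset.univ.erase i0 :=
        Finset.mem_erase.mpr ⟨hii0, Finset.mem_univ i⟩
      rw [Finset.sum_eq_single_of_mem i hmem]
      · have h1 : M i i0 = -c := by
          simp [M, coconutMatrix, hii0, hi0def]; intro h; exact (hi (congrArg Fin.val h)).elim
        have h2 : M i i = 2 := by simp [M, coconutMatrix, hi]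
        rw [h1, h2]; ring
      · intro b hb hbi
        have hb0 : (b : ℕ) ≠ 0 := by
          intro h
          exact (Finset.mem_erase.mp hb).1 (Fin.ext h)
        have hib : i ≠ b := fun h => hbi h.symm
        simp [M, coconutMatrix, hb0, hib]
  -- the linear map φ
  set φ : (Fin s → ℤ) →ₗ[ℤ] ((Fin (s-2) → ZMod 2) × ZMod (2*m)) :=
    { toFun := fun x =>
        (fun j => ((x ⟨(j : ℕ)+1, by have := j.isLt; omega⟩ + x iL : ℤ) : ZMod 2),
         ((x i0 + (m : ℤ) * x iL : ℤ) : ZMod (2*m)))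
      map_add' := by
        intro x y
        refine Prod.ext ?_ ?_
        · funext j; push_cast; simp; ring
        · push_cast; simp; ring
      map_smul' := by
        intro r x
        refine Prod.ext ?_ ?_
        · funext j; push_cast; simp; ring
        · push_cast; simp; ring } with hφdef
  obtain ⟨t, ht⟩ := hc
  -- range ≤ ker
  have hsub : LinearMap.range (Matrix.toLin' M) ≤ LinearMap.ker φ := by
    rintro _ ⟨y, rfl⟩
    rw [LinearMap.mem_ker]
    refine Prod.ext ?_ ?_
    · funext j
      show ((Matrix.toLin' M y ⟨(j:ℕ)+1, _⟩ + Matrix.toLin' M y iL : ℤ) : ZMod 2) = 0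
      rw [hML, hML]
      rw [if_neg (by simp : ¬ ((⟨(j:ℕ)+1, by have := j.isLt; omega⟩ : Fin s) : ℕ) = 0),
        if_neg (by simp [hiLdef]; omega : ¬ ((iL : Fin s) : ℕ) = 0)]
      rw [ZMod.intCast_zmod_eq_zero_iff_dvd]
      exact ⟨y ⟨(j:ℕ)+1, by have := j.isLt; omega⟩ + y iL - c * y i0, by push_cast; ring⟩
    · show ((Matrix.toLin' M y i0 + (m:ℤ) * Matrix.toLin' M y iL : ℤ) : ZMod (2*m)) = 0
      rw [hML, hML, if_pos (by simp [hi0def]), if_neg (by simp [hiLdef]; omega)]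
      rw [ZMod.intCast_zmod_eq_zero_iff_dvd]
      refine ⟨y iL - t * y i0, ?_⟩
      have : (m:ℤ) * y i0 + (m:ℤ) * (2 * y iL - c * y i0)
          = (m:ℤ) * y i0 * (1 - c) + 2 * m * y iL := by ring
      rw [this, ht]; push_cast; ring
  -- ker ≤ range
  have hker : LinearMap.ker φ ≤ LinearMap.range (Matrix.toLin' M) := by
    intro x hx
    rw [LinearMap.mem_ker] at hx
    rw [hφdef] at hx
    simp only [LinearMap.coe_mk, AddHom.coe_mk, Prod.ext_iff, Prod.fst_zero,
      Prod.snd_zero, funext_iff, Pi.zero_apply] at hx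
    obtain ⟨h1, h2⟩ := hx
    rw [ZMod.intCast_zmod_eq_zero_iff_dvd] at h2
    obtain ⟨k, hk⟩ := h2
    push_cast at hk
    obtain ⟨y0, hy0def⟩ : ∃ y0 : ℤ, y0 = 2 * k - x iL := ⟨_, rfl⟩
    obtain ⟨y, hydef⟩ : ∃ y : Fin s → ℤ,
        y = fun i : Fin s => if (i : ℕ) = 0 then y0 else (x i + c * y0) / 2 := ⟨_, rfl⟩
    have hdvd : ∀ i : Fin s, (i : ℕ) ≠ 0 → (2 : ℤ) ∣ x i + c * y0 := by
      intro i hi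
      by_cases hiL : (i : ℕ) = s - 1
      · have : i = iL := Fin.ext hiL
        subst this
        refine ⟨c * k - t * x iL, ?_⟩
        rw [hy0def, ht]; ring
      · have hjlt : (i : ℕ) - 1 < s - 2 := by have := i.isLt; omega
        have := h1 ⟨(i:ℕ)-1, hjlt⟩
        rw [ZMod.intCast_zmod_eq_zero_iff_dvd] at this
        have hieq : (⟨(i:ℕ)-1+1, by omega⟩ : Fin s) = i := Fin.ext (by simp; omega)
        rw [hieq] at this
        obtain ⟨w, hw⟩ := this
        refine ⟨w - x iL + c * k - t * x iL, ?_⟩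
        have : x i = 2 * w - x iL := by push_cast at hw; omega
        rw [this, hy0def, ht]; ring
    refine ⟨y, ?_⟩
    funext i
    rw [hML]
    by_cases hi : (i : ℕ) = 0
    · rw [if_pos hi]
      have hii0 : i = i0 := Fin.ext hi
      subst hii0
      have : y i0 = y0 := by rw [hydef]; simp [hi0def]
      rw [this, hy0def]
      linarith [hk]
    · rw [if_neg hi]
      have hyi0 : y i0 = y0 := by rw [hydef]; simp [hi0def]
      have hyi : y i = (x i + c * y0) / 2 := by rw [hydef]; simp [hi]
      rw [hyi0, hyi, Int.mul_ediv_cancel' (hdvd i hi)]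
      ring
  -- surjectivity of φ
  have hsurj : Function.Surjective φ := by
    rintro ⟨f, z⟩
    obtain ⟨F, hF⟩ : ∃ F : ℕ → ZMod 2,
        F = fun n => if h : n < s - 2 then f ⟨n, h⟩ else 0 := ⟨_, rfl⟩
    obtain ⟨xx, hxx⟩ : ∃ xx : Fin s → ℤ,
        xx = fun i : Fin s => if (i : ℕ) = 0 then (z.val : ℤ)
          else if (i : ℕ) < s - 1 then ((F ((i : ℕ) - 1)).val : ℤ) else 0 := ⟨_, rfl⟩
    have hx0 : xx i0 = (z.val : ℤ) := by
      rw [hxx]; simp [hi0def]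
    have hxL : xx iL = 0 := by
      rw [hxx]
      show (if ((iL : Fin s) : ℕ) = 0 then (z.val : ℤ)
        else if ((iL : Fin s) : ℕ) < s - 1 then ((F (((iL : Fin s) : ℕ) - 1)).val : ℤ) else 0) = 0
      rw [if_neg (by simp [hiLdef]; omega), if_neg (by simp [hiLdef])]
    have hxj : ∀ j : Fin (s - 2),
        xx ⟨(j : ℕ) + 1, by have := j.isLt; omega⟩ = ((f j).val : ℤ) := by
      intro j
      have hj := j.isLt
      rw [hxx]
      show (if ((j : ℕ) + 1 : ℕ) = 0 then (z.val : ℤ)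
        else if ((j : ℕ) + 1 : ℕ) < s - 1 then ((F (((j : ℕ) + 1 : ℕ) - 1)).val : ℤ) else 0)
        = ((f j).val : ℤ)
      rw [if_neg (by omega), if_pos (by omega), hF]
      show (((if h : (j : ℕ) < s - 2 then f ⟨(j : ℕ), h⟩ else 0).val : ℤ)) = _
      rw [dif_pos hj]
    refine ⟨xx, ?_⟩
    rw [hφdef]
    simp only [LinearMap.coe_mk, AddHom.coe_mk, Prod.mk.injEq]
    constructor
    · funext j
      rw [hxj j, hxL]
      push_cast
      simp [ZMod.natCast_val, ZMod.cast_id]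
    · rw [hx0, hxL]
      push_cast
      simp [ZMod.natCast_val, ZMod.cast_id]
  -- assemble
  set ψ := Submodule.liftQ _ φ hsub with hψdef
  have hinj : Function.Injective ψ := by
    rw [← LinearMap.ker_eq_bot]
    exact Submodule.ker_liftQ_eq_bot _ φ hsub hker
  have hsurj' : Function.Surjective ψ := by
    intro z
    obtain ⟨x, hx⟩ := hsurj z
    exact ⟨Submodule.Quotient.mk x, hx⟩
  exact ⟨(LinearEquiv.ofBijective ψ ⟨hinj, hsurj'⟩).toAddEquiv⟩
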